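/- For a, t > 0, the integral I = integral_a^infinity x * exp(-(1/2)(a - x)^2 - x^2/(2t)) dx equals a * sqrt(pi t^3 / (2 (t+1)^3)) * exp(-a^2/(2(t+1))) * erfc(a / sqrt(2 t (t+1))) + (t/(t+1)) * exp(-a^2/(2t)). -/

import Mathlib

open MeasureTheory Real

/-- The complementary error function. -/
noncomputable def erfc (x : ℝ) : ℝ :=
  1 - (2 / Real.sqrt Real.pi) * ∫ u in (0 : ℝ)..x, Real.exp (-u ^ 2)

private lemma integral_comp_sub_right_Ioi' (g : ℝ → ℝ) (a m : ℝ) :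
    ∫ x in Set.Ioi a, g (x - m) = ∫ y in Set.Ioi (a - m), g y := by
  have h := (measurePreserving_sub_right (volume : Measure ℝ) m).setIntegral_preimage_emb
    (Homeomorph.subRight m).measurableEmbedding g (Set.Ioi (a - m))
  have hp : (fun x : ℝ => x - m) ⁻¹' Set.Ioi (a - m) = Set.Ioi a := by
    ext x; simp [sub_lt_sub_iff_right]
  rw [hp] at h
  exact h

private lemma eq_of_sq_eq' {x y : ℝ} (hx : 0 ≤ x) (hy : 0 ≤ y) (h : x ^ 2 = y ^ 2) : x = y := by
  rw [← Real.sqrt_sq hx, h, Real.sqrt_sq hy]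

/-- The Gaussian integral `I = ∫_a^∞ x e^{-(a-x)²/2 - x²/(2t)} dx`. -/
theorem gaussian_integral_I (a t : ℝ) (ha : 0 < a) (ht : 0 < t) :
    ∫ x in Set.Ioi a, x * Real.exp (-(1 / 2) * (a - x) ^ 2 - x ^ 2 / (2 * t))
      = a * Real.sqrt (Real.pi * t ^ 3 / (2 * (t + 1) ^ 3))
          * Real.exp (-a ^ 2 / (2 * (t + 1)))
          * erfc (a / Real.sqrt (2 * t * (t + 1)))
        + (t / (t + 1)) * Real.exp (-a ^ 2 / (2 * t)) := by
  obtain ⟨c, hcdef⟩ : ∃ c : ℝ, c = t + 1 := ⟨_, rfl⟩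
  have hc : (0:ℝ) < c := by rw [hcdef]; linarith
  rw [show t + 1 = c from hcdef.symm]
  obtain ⟨b, hbdef⟩ : ∃ b : ℝ, b = c / (2 * t) := ⟨_, rfl⟩
  have hb : 0 < b := by rw [hbdef]; positivity
  obtain ⟨m, hmdef⟩ : ∃ m : ℝ, m = a * t / c := ⟨_, rfl⟩
  have hm : 0 ≤ m := by rw [hmdef]; positivity
  obtain ⟨s, hsdef⟩ : ∃ s : ℝ, s = Real.sqrt b := ⟨_, rfl⟩
  have hs : 0 < s := by rw [hsdef]; exact Real.sqrt_pos.mpr hb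
  have hs2 : s ^ 2 = b := by rw [hsdef]; exact Real.sq_sqrt hb.le
  have ham : a - m = a / c := by rw [hmdef, hcdef]; field_simp; ring
  have hamp : 0 < a - m := by rw [ham]; positivity
  -- exponent identity
  have key : ∀ x : ℝ, -(1 / 2) * (a - x) ^ 2 - x ^ 2 / (2 * t)
      = -a ^ 2 / (2 * c) + -b * (x - m) ^ 2 := by
    intro x
    rw [hbdef, hmdef, hcdef]
    have h1 : t ≠ 0 := ht.ne'
    have h2 : t + 1 ≠ 0 := by linarith
    field_simp
    ring
  -- integrability
  have hint2 : IntegrableOn (fun x : ℝ => Real.exp (-b * (x - m) ^ 2)) (Set.Ioi a) :=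
    ((integrable_exp_neg_mul_sq hb).comp_sub_right m).integrableOn
  have hint1 : IntegrableOn (fun x : ℝ => (x - m) * Real.exp (-b * (x - m) ^ 2)) (Set.Ioi a) :=
    ((integrable_mul_exp_neg_mul_sq hb).comp_sub_right m).integrableOn
  -- Step 1: rewrite integrand
  have step1 : ∫ x in Set.Ioi a, x * Real.exp (-(1 / 2) * (a - x) ^ 2 - x ^ 2 / (2 * t))
      = Real.exp (-a ^ 2 / (2 * c)) *
        ((∫ x in Set.Ioi a, (x - m) * Real.exp (-b * (x - m) ^ 2))
          + m * ∫ x in Set.Ioi a, Real.exp (-b * (x - m) ^ 2)) := by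
    rw [← MeasureTheory.integral_const_mul, ← MeasureTheory.integral_add hint1 (hint2.const_mul m),
      ← MeasureTheory.integral_const_mul]
    refine setIntegral_congr_fun measurableSet_Ioi (fun x _ => ?_)
    rw [key x, Real.exp_add]
    ring
  -- Step 2: first integral via FTC
  have step2 : (∫ x in Set.Ioi a, (x - m) * Real.exp (-b * (x - m) ^ 2))
      = (1 / (2 * b)) * Real.exp (-b * (a - m) ^ 2) := by
    have hderiv : ∀ x ∈ Set.Ioi a, HasDerivAt
        (fun x : ℝ => -(1 / (2 * b)) * Real.exp (-b * (x - m) ^ 2))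
        ((x - m) * Real.exp (-b * (x - m) ^ 2)) x := by
      intro x _
      have h1 : HasDerivAt (fun x : ℝ => (x - m) ^ 2) (2 * (x - m)) x := by
        have := ((hasDerivAt_id x).sub_const m).pow 2
        simp at this
        exact this
      have h2 : HasDerivAt (fun x : ℝ => -b * (x - m) ^ 2) (-b * (2 * (x - m))) x :=
        h1.const_mul (-b)
      have h3 := (h2.exp).const_mul (-(1 / (2 * b)))
      refine h3.congr_deriv ?_
      field_simp
    have htend : Filter.Tendsto (fun x : ℝ => -(1 / (2 * b)) * Real.exp (-b * (x - m) ^ 2))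
        Filter.atTop (nhds 0) := by
      have h1 : Filter.Tendsto (fun x : ℝ => (x - m) ^ 2) Filter.atTop Filter.atTop := by
        have := (Filter.tendsto_pow_atTop (two_ne_zero)).comp
          (Filter.tendsto_atTop_add_const_right Filter.atTop (-m) Filter.tendsto_id)
        simpa [sub_eq_add_neg, Function.comp_def] using this
      have h2 : Filter.Tendsto (fun x : ℝ => -b * (x - m) ^ 2) Filter.atTop Filter.atBot :=
        (Filter.tendsto_const_mul_atBot_of_neg (by linarith)).mpr h1
      have h3 := (Real.tendsto_exp_atBot).comp h2
      have h4 := h3.const_mul (-(1 / (2 * b)))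
      simpa using h4
    have hcont : ContinuousWithinAt
        (fun x : ℝ => -(1 / (2 * b)) * Real.exp (-b * (x - m) ^ 2)) (Set.Ici a) a := by
      apply Continuous.continuousWithinAt
      fun_prop
    have := integral_Ioi_of_hasDerivAt_of_tendsto hcont hderiv hint1 htend
    rw [this]
    ring
  -- Step 3: second integral via substitution
  set L : ℝ := s * (a - m) with hLdef
  have hL : 0 < L := mul_pos hs hamp
  have step3 : (∫ x in Set.Ioi a, Real.exp (-b * (x - m) ^ 2))
      = s⁻¹ * ∫ u in Set.Ioi L, Real.exp (-u ^ 2) := by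
    have e1 : (∫ x in Set.Ioi a, Real.exp (-b * (x - m) ^ 2))
        = ∫ y in Set.Ioi (a - m), Real.exp (-b * y ^ 2) :=
      integral_comp_sub_right_Ioi' (fun y => Real.exp (-b * y ^ 2)) a m
    have e2 : (∫ y in Set.Ioi (a - m), Real.exp (-b * y ^ 2))
        = ∫ y in Set.Ioi (a - m), (fun u : ℝ => Real.exp (-u ^ 2)) (s * y) := by
      refine setIntegral_congr_fun measurableSet_Ioi (fun y _ => ?_)
      simp only
      congr 1
      rw [mul_pow, hs2]
      ring
    rw [e1, e2, MeasureTheory.integral_comp_mul_left_Ioi (fun u : ℝ => Real.exp (-u ^ 2)) _ hs]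
    simp [hLdef, smul_eq_mul]
  -- Step 4: the tail Gaussian integral in terms of erfc
  have tail : (∫ u in Set.Ioi L, Real.exp (-u ^ 2)) = (Real.sqrt Real.pi / 2) * erfc L := by
    have hint0 : IntegrableOn (fun u : ℝ => Real.exp (-u ^ 2)) (Set.Ioi (0:ℝ)) := by
      have := (integrable_exp_neg_mul_sq (one_pos)).integrableOn (s := Set.Ioi (0:ℝ))
      simpa using this
    have hintL : IntegrableOn (fun u : ℝ => Real.exp (-u ^ 2)) (Set.Ioi L) := by
      have := (integrable_exp_neg_mul_sq (one_pos)).integrableOn (s := Set.Ioi L)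
      simpa using this
    have hintOc : IntegrableOn (fun u : ℝ => Real.exp (-u ^ 2)) (Set.Ioc 0 L) := by
      have := (integrable_exp_neg_mul_sq (one_pos)).integrableOn (s := Set.Ioc (0:ℝ) L)
      simpa using this
    have hsplit : (∫ u in Set.Ioi (0:ℝ), Real.exp (-u ^ 2))
        = (∫ u in Set.Ioc 0 L, Real.exp (-u ^ 2)) + ∫ u in Set.Ioi L, Real.exp (-u ^ 2) := by
      rw [← MeasureTheory.setIntegral_union (Set.Ioc_disjoint_Ioi le_rfl) measurableSet_Ioi
        hintOc hintL, Set.Ioc_union_Ioi_eq_Ioi hL.le]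
    have hgauss : (∫ u in Set.Ioi (0:ℝ), Real.exp (-u ^ 2)) = Real.sqrt Real.pi / 2 := by
      have := integral_gaussian_Ioi 1
      simpa using this
    have hIoc : (∫ u in Set.Ioc 0 L, Real.exp (-u ^ 2))
        = ∫ u in (0:ℝ)..L, Real.exp (-u ^ 2) := (intervalIntegral.integral_of_le hL.le).symm
    have hpi : Real.sqrt Real.pi > 0 := Real.sqrt_pos.mpr Real.pi_pos
    have : (∫ u in Set.Ioi L, Real.exp (-u ^ 2))
        = Real.sqrt Real.pi / 2 - ∫ u in (0:ℝ)..L, Real.exp (-u ^ 2) := by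
      rw [← hgauss, hsplit, hIoc]; ring
    rw [this, erfc]
    field_simp
  -- algebraic identities
  have hL' : L = a / Real.sqrt (2 * t * c) := by
    have h2tc : (0:ℝ) < 2 * t * c := by positivity
    refine eq_of_sq_eq' hL.le (by positivity) ?_
    rw [hLdef, mul_pow, hs2, ham, div_pow, div_pow, Real.sq_sqrt h2tc.le, hbdef]
    have h1 : t ≠ 0 := ht.ne'
    have h2 : c ≠ 0 := hc.ne'
    field_simp
  have hcoef : m * s⁻¹ * (Real.sqrt Real.pi / 2)
      = a * Real.sqrt (Real.pi * t ^ 3 / (2 * c ^ 3)) := by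
    have hrhs : (0:ℝ) ≤ Real.pi * t ^ 3 / (2 * c ^ 3) := by positivity
    refine eq_of_sq_eq' (by positivity) (by positivity) ?_
    rw [mul_pow, mul_pow, mul_pow, div_pow, Real.sq_sqrt Real.pi_pos.le,
      Real.sq_sqrt hrhs, inv_pow, hs2, hmdef, hbdef]
    have h1 : t ≠ 0 := ht.ne'
    have h2 : c ≠ 0 := hc.ne'
    field_simp
  have hexp2 : Real.exp (-a ^ 2 / (2 * c)) * Real.exp (-b * (a - m) ^ 2)
      = Real.exp (-a ^ 2 / (2 * t)) := by
    rw [← Real.exp_add]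
    congr 1
    rw [ham, hbdef, hcdef]
    have h1 : t ≠ 0 := ht.ne'
    have h2 : t + 1 ≠ 0 := by linarith
    field_simp
    ring
  have hfrac : (1 : ℝ) / (2 * b) = t / c := by
    rw [hbdef]
    have h1 : t ≠ 0 := ht.ne'
    have h2 : c ≠ 0 := hc.ne'
    field_simp
  -- put everything together
  rw [step1, step2, step3, tail]
  rw [show a / Real.sqrt (2 * t * c) = L by rw [hL']]
  calc Real.exp (-a ^ 2 / (2 * c)) *
        (1 / (2 * b) * Real.exp (-b * (a - m) ^ 2)
          + m * (s⁻¹ * (Real.sqrt Real.pi / 2 * erfc L)))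
      = (1 / (2 * b)) * (Real.exp (-a ^ 2 / (2 * c)) * Real.exp (-b * (a - m) ^ 2))
        + (m * s⁻¹ * (Real.sqrt Real.pi / 2)) * Real.exp (-a ^ 2 / (2 * c)) * erfc L := by
        ring
    _ = a * Real.sqrt (Real.pi * t ^ 3 / (2 * c ^ 3)) * Real.exp (-a ^ 2 / (2 * c))
        * erfc L + t / c * Real.exp (-a ^ 2 / (2 * t)) := by
        rw [hexp2, hfrac, hcoef]
        ring
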